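/- Fix p ≥ 1, finite nonempty types S_1, …, S_p of protected attribute values, a finite type Y of outcomes, and a joint probability mass function q on (S_1 × … × S_p) × Y, i.e. q ≥ 0 and ∑_{s,y} q(s,y) = 1. For a full attribute tuple s with marginal P(s) = ∑_y q(s,y) > 0 define P(y|s) = q(s,y)/P(s); for a nonempty subset T of the attribute indices and a partial tuple d (a value assignment on the coordinates in T) with marginal P(d) = ∑_{s restricting to d} P(s) > 0, define P(y|d) = (∑_{s restricting to d} q(s,y))/P(d). Suppose that for every outcome y ∈ Y and every pair of full tuples s, s' with P(s) > 0 and P(s') > 0 we have P(y|s) ≤ exp(ε)·P(y|s'). Then for every outcome y ∈ Y and every pair of partial tuples d, d' on T with P(d) > 0 and P(d') > 0 we have P(y|d) ≤ exp(ε)·P(y|d'). -/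
import Mathlib


open Finset

/-- Theorem 2 (Intersectionality Property), finite probabilistic form:
ε-DF over the full product of protected attributes implies ε-DF over the product
of any nonempty subset of the attributes, after marginalizing the joint pmf. -/
theorem intersectionality_property
    {p : ℕ} (hp : 1 ≤ p) (S : Fin p → Type*)
    [∀ i, Fintype (S i)] [∀ i, Nonempty (S i)] [∀ i, DecidableEq (S i)]
    (Y : Type*) [Fintype Y]
    (q : (∀ i, S i) × Y → ℝ) (hq0 : ∀ z, 0 ≤ q z) (hq1 : ∑ z, q z = 1)
    (ε : ℝ)
    (hDF : ∀ y : Y, ∀ s s' : ∀ i, S i,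
      0 < ∑ y', q (s, y') → 0 < ∑ y', q (s', y') →
      q (s, y) / (∑ y', q (s, y')) ≤ Real.exp ε * (q (s', y) / (∑ y', q (s', y'))))
    (T : Finset (Fin p)) (hT : T.Nonempty) :
    ∀ y : Y, ∀ d d' : (∀ i : T, S i),
      0 < (∑ s : ∀ i, S i, if (fun i : T => s i) = d then (∑ y', q (s, y')) else 0) →
      0 < (∑ s : ∀ i, S i, if (fun i : T => s i) = d' then (∑ y', q (s, y')) else 0) →
      (∑ s : ∀ i, S i, if (fun i : T => s i) = d then q (s, y) else 0) /
          (∑ s : ∀ i, S i, if (fun i : T => s i) = d then (∑ y', q (s, y')) else 0) ≤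
        Real.exp ε *
          ((∑ s : ∀ i, S i, if (fun i : T => s i) = d' then q (s, y) else 0) /
            (∑ s : ∀ i, S i, if (fun i : T => s i) = d' then (∑ y', q (s, y')) else 0)) := by
  classical
  intro y d d' hd hd'
  set P : (∀ i, S i) → ℝ := fun s => ∑ y', q (s, y') with hP
  have hPnn : ∀ s, 0 ≤ P s := fun s => Finset.sum_nonneg fun _ _ => hq0 _
  have hqP : ∀ s (y : Y), q (s, y) ≤ P s := fun s y =>
    Finset.single_le_sum (fun y' _ => hq0 (s, y')) (Finset.mem_univ y)
  have hq0' : ∀ s, P s = 0 → q (s, y) = 0 := fun s h =>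
    le_antisymm (h ▸ hqP s y) (hq0 _)
  set F' : Finset (∀ i, S i) := Finset.univ.filter
    (fun s => (fun i : T => s i) = d' ∧ 0 < P s) with hF'
  have hF'ne : F'.Nonempty := by
    by_contra h
    rw [Finset.not_nonempty_iff_eq_empty] at h
    have hz : (∑ s : ∀ i, S i, if (fun i : T => s i) = d' then P s else 0) = 0 := by
      apply Finset.sum_eq_zero
      intro s _
      by_cases hc : (fun i : T => s i) = d'
      · simp only [hc, if_true]
        by_contra hne
        have hpos : 0 < P s := lt_of_le_of_ne (hPnn s) (Ne.symm hne)
        have hmem : s ∈ F' := by simp [hF', hc, hpos]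
        simp [h] at hmem
      · simp [hc]
    rw [hz] at hd'
    exact lt_irrefl 0 hd'
  obtain ⟨s0, hs0mem, hs0min⟩ := F'.exists_min_image (fun s => q (s, y) / P s) hF'ne
  rw [hF', Finset.mem_filter] at hs0mem
  obtain ⟨-, hs0d, hs0P⟩ := hs0mem
  set ρ := q (s0, y) / P s0 with hρ
  have hρnn : 0 ≤ ρ := div_nonneg (hq0 _) (hPnn _)
  have claim1 : (∑ s : ∀ i, S i, if (fun i : T => s i) = d then q (s, y) else 0)
      ≤ Real.exp ε * ρ * (∑ s : ∀ i, S i, if (fun i : T => s i) = d then P s else 0) := by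
    rw [Finset.mul_sum]
    apply Finset.sum_le_sum
    intro s _
    by_cases hc : (fun i : T => s i) = d
    · simp only [hc, if_true]
      rcases eq_or_lt_of_le (hPnn s) with hz | hz
      · rw [hq0' s hz.symm, ← hz, mul_zero]
      · have hdf := hDF y s s0 hz hs0P
        calc q (s, y) = q (s, y) / P s * P s := by field_simp
          _ ≤ Real.exp ε * ρ * P s :=
              mul_le_mul_of_nonneg_right hdf (hPnn s)
    · simp [hc]
  have claim2 : ρ * (∑ s : ∀ i, S i, if (fun i : T => s i) = d' then P s else 0)
      ≤ (∑ s : ∀ i, S i, if (fun i : T => s i) = d' then q (s, y) else 0) := by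
    rw [Finset.mul_sum]
    apply Finset.sum_le_sum
    intro s _
    by_cases hc : (fun i : T => s i) = d'
    · simp only [hc, if_true]
      rcases eq_or_lt_of_le (hPnn s) with hz | hz
      · rw [← hz, mul_zero]; exact hq0 _
      · have hmem : s ∈ F' := by simp [hF', hc, hz]
        have hmin := hs0min s hmem
        calc ρ * P s ≤ q (s, y) / P s * P s :=
              mul_le_mul_of_nonneg_right hmin (hPnn s)
          _ = q (s, y) := by field_simp
    · simp [hc]
  have hρle : ρ ≤ (∑ s : ∀ i, S i, if (fun i : T => s i) = d' then q (s, y) else 0) /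
      (∑ s : ∀ i, S i, if (fun i : T => s i) = d' then P s else 0) :=
    (le_div_iff₀ hd').mpr claim2
  rw [div_le_iff₀ hd]
  calc (∑ s : ∀ i, S i, if (fun i : T => s i) = d then q (s, y) else 0)
      ≤ Real.exp ε * ρ * (∑ s : ∀ i, S i, if (fun i : T => s i) = d then P s else 0) := claim1
    _ ≤ Real.exp ε * ((∑ s : ∀ i, S i, if (fun i : T => s i) = d' then q (s, y) else 0) /
        (∑ s : ∀ i, S i, if (fun i : T => s i) = d' then P s else 0)) *
        (∑ s : ∀ i, S i, if (fun i : T => s i) = d then P s else 0) :=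
      mul_le_mul_of_nonneg_right
        (mul_le_mul_of_nonneg_left hρle (Real.exp_pos ε).le) hd.le
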